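/- For a strict partition μ contained in the staircase with a removable box allowed, there is a bijection showing that the coefficient extraction ⟨λ, A₀(x)A₁(x)⋯A_n(x)·μ⟩ equals Σ_{V} β^{-|λ/μ|}(βx)^{|V|}, where the sum runs over vertical strips V with V ∪ SD_μ = SD_λ and V ∩ SD_μ ⊆ Rem(μ). -/

import Mathlib

noncomputable section
open Finset

/-- A strict partition: a strictly decreasing list of positive integers. -/
def StrictPartition : Type := {l : List ℕ // l.Chain' (· > ·) ∧ ∀ x ∈ l, 0 < x}

/-- The shifted diagram of a list `l = (l₁, l₂, …)`:
`SD = {(i, i+j-1) : 1 ≤ i ≤ length l, 1 ≤ j ≤ lᵢ}` (rows and columns indexed from 1). -/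
def shiftedDiagram (l : List ℕ) : Finset (ℕ × ℕ) :=
  (Finset.Icc 1 l.length ×ˢ Finset.Icc 1 (l.length + l.sum)).filter
    fun p => p.1 ≤ p.2 ∧ p.2 < p.1 + l.getD (p.1 - 1) 0

/-- The shifted diagram of a strict partition. -/
def SD (μ : StrictPartition) : Finset (ℕ × ℕ) := shiftedDiagram μ.1

/-- `c` is a removable box of the strict partition `μ`: `c ∈ SD μ` and deleting `c`
yields the shifted diagram of a strict partition. -/
def IsRemovable (μ : StrictPartition) (c : ℕ × ℕ) : Prop :=
  c ∈ SD μ ∧ ∃ ν : StrictPartition, SD ν = (SD μ).erase c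

/-- `c` is an addable box of the strict partition `μ`: `c ∉ SD μ` and adjoining `c`
yields the shifted diagram of a strict partition. -/
def IsAddable (μ : StrictPartition) (c : ℕ × ℕ) : Prop :=
  c ∉ SD μ ∧ ∃ ν : StrictPartition, SD ν = insert c (SD μ)

open scoped Classical in
/-- The diagonal box-adding operator `a_n` on basis elements: `a_n μ = β·μ` if `μ` has a
removable box on diagonal `n`; `a_n μ = ν` if `SD ν = SD μ ⊔ {(i,j)}` with `j - i = n`;
and `a_n μ = 0` otherwise. -/
def aRaw {R : Type*} [CommRing R] (β : R) (n : ℕ) (μ : StrictPartition) :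
    StrictPartition →₀ R :=
  if ∃ c : ℕ × ℕ, IsRemovable μ c ∧ c.2 = c.1 + n then Finsupp.single μ β
  else if h : ∃ ν : StrictPartition, ∃ c : ℕ × ℕ, c.2 = c.1 + n ∧ c ∉ SD μ ∧
      SD ν = insert c (SD μ) then
    Finsupp.single h.choose 1
  else 0

/-- The operator `a_n`, extended linearly to the free module on strict partitions. -/
def aOp {R : Type*} [CommRing R] (β : R) (n : ℕ) :
    (StrictPartition →₀ R) →ₗ[R] (StrictPartition →₀ R) :=
  Finsupp.lift (StrictPartition →₀ R) R StrictPartition (aRaw β n)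

/-- The operator `A_i(x) := 1 + x·a_i`. -/
def AOp {R : Type*} [CommRing R] (β : R) (i : ℕ) (x : R) :
    (StrictPartition →₀ R) →ₗ[R] (StrictPartition →₀ R) :=
  LinearMap.id + x • aOp β i


/-- The composite operator `A₀(x)·A₁(x)·⋯·A_n(x)` (so `A_n(x)` is applied first). -/
def Achain {R : Type*} [CommRing R] (β x : R) : ℕ → ((StrictPartition →₀ R) →ₗ[R] (StrictPartition →₀ R))
  | 0 => AOp β 0 x
  | n + 1 => (Achain β x n).comp (AOp β (n + 1) x)

namespace SP

def f (μ : StrictPartition) (k : ℕ) : ℕ := μ.1.getD k 0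

lemma f_pos_iff {μ : StrictPartition} {k : ℕ} : 0 < f μ k ↔ k < μ.1.length := by
  constructor
  · intro h
    by_contra hk
    rw [f, List.getD_eq_default _ _ (not_lt.1 hk)] at h
    omega
  · intro h
    have := μ.2.2 (μ.1.getD k 0) (by rw [List.getD_eq_getElem _ _ h]; exact List.getElem_mem _)
    exact this

lemma f_eq_zero {μ : StrictPartition} {k : ℕ} (h : μ.1.length ≤ k) : f μ k = 0 :=
  List.getD_eq_default _ _ h

lemma f_valid (μ : StrictPartition) (k : ℕ) : f μ (k+1) = 0 ∨ f μ (k+1) < f μ k := by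
  rcases lt_or_ge (k+1) μ.1.length with h | h
  · right
    have hc := List.isChain_iff_getElem.1 μ.2.1 k (by omega)
    simp only [f]
    rw [List.getD_eq_getElem _ _ h, List.getD_eq_getElem _ _ (by omega : k < μ.1.length)]
    simpa [List.get_eq_getElem] using hc
  · left; exact f_eq_zero h

lemma f_anti {μ : StrictPartition} {j k : ℕ} (h : j ≤ k) : f μ k ≤ f μ j := by
  induction k with
  | zero => rw [Nat.le_zero.1 h]
  | succ n ih =>
    rcases Nat.eq_or_lt_of_le h with rfl | h'
    · exact le_rfl
    · have := ih (by omega)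
      rcases f_valid μ n with h0 | hlt <;> omega

lemma f_strict {μ : StrictPartition} {j k : ℕ} (hk : f μ k ≠ 0) (h : j ≤ k) :
    f μ k + (k - j) ≤ f μ j := by
  induction k with
  | zero => simp_all
  | succ n ih =>
    rcases Nat.eq_or_lt_of_le h with rfl | h'
    · simp
    · have h2 : f μ (n+1) < f μ n := by rcases f_valid μ n with h0 | hlt <;> omega
      have := ih (by omega) (by omega)
      omega

/-- canonical membership lemma -/
lemma mem_SD {μ : StrictPartition} {k t : ℕ} : (k+1, k+1+t) ∈ SD μ ↔ t < f μ k := by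
  simp only [SD, shiftedDiagram, Finset.mem_filter, Finset.mem_product, Finset.mem_Icc]
  constructor
  · rintro ⟨⟨⟨-, -⟩, -⟩, -, h2⟩
    simp only [Nat.add_sub_cancel] at h2
    simp only [f]
    omega
  · intro h
    have hk : k < μ.1.length := f_pos_iff.1 (by omega)
    have hsum : f μ k ≤ μ.1.sum := by
      apply List.single_le_sum (by intro y hy; exact Nat.zero_le y)
      rw [f, List.getD_eq_getElem _ _ hk]; exact List.getElem_mem _
    simp only [f] at h hsum ⊢
    refine ⟨⟨⟨by omega, by omega⟩, by omega, by omega⟩, by omega, ?_⟩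
    simp only [Nat.add_sub_cancel]
    omega

lemma mem_SD_elim {μ : StrictPartition} {c : ℕ × ℕ} (h : c ∈ SD μ) :
    ∃ k t, c = (k+1, k+1+t) ∧ t < f μ k := by
  obtain ⟨a, b⟩ := c
  simp only [SD, shiftedDiagram, Finset.mem_filter, Finset.mem_product, Finset.mem_Icc] at h
  obtain ⟨⟨⟨h1, -⟩, -⟩, h3, h4⟩ := h
  refine ⟨a - 1, b - a, by simp; omega, ?_⟩
  have : a - 1 + 1 = a := by omega
  rw [show a - 1 = a - 1 from rfl]
  simp only [f]
  omega


lemma f_zero (μ : StrictPartition) : f μ 0 = μ.1.headD 0 := by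
  rcases μ with ⟨_ | ⟨a, l⟩, h⟩ <;> rfl

-- Part 2

def Valid (g : ℕ → ℕ) : Prop := ∀ k, g (k+1) = 0 ∨ g (k+1) < g k

lemma valid_f (μ : StrictPartition) : Valid (f μ) := f_valid μ

lemma Valid.zero_mono {g : ℕ → ℕ} (hg : Valid g) {j k : ℕ} (h : j ≤ k) (hj : g j = 0) :
    g k = 0 := by
  induction k with
  | zero => rw [Nat.le_zero.1 h] at hj; exact hj
  | succ n ih =>
    rcases Nat.eq_or_lt_of_le h with rfl | h'
    · exact hj
    · have hn := ih (by omega)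
      rcases hg n with h0 | hlt
      · exact h0
      · omega

lemma Valid.exists_zero {g : ℕ → ℕ} (hg : Valid g) : ∃ N, g N = 0 := by
  refine ⟨g 0, ?_⟩
  have key : ∀ k, g k = 0 ∨ g k + k ≤ g 0 := by
    intro k
    induction k with
    | zero => right; omega
    | succ n ih =>
      rcases hg n with h0 | hlt
      · left; exact h0
      · rcases ih with h | h
        · left; exact hg.zero_mono (by omega) h
        · right; omega
  rcases key (g 0) with h | h
  · exact h
  · omega

def ofF (g : ℕ → ℕ) (hg : Valid g) : StrictPartition := by
  classical
  refine ⟨(List.range (Nat.find hg.exists_zero)).map g, ?_, ?_⟩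
  · apply List.isChain_iff_getElem.2
    intro i hi
    simp only [List.length_map, List.length_range] at hi
    simp only [List.get_eq_getElem, List.getElem_map, List.getElem_range]
    have h1 : g (i+1) ≠ 0 := Nat.find_min hg.exists_zero (by omega)
    rcases hg i with h0 | hlt
    · omega
    · exact hlt
  · intro y hy
    simp only [List.mem_map, List.mem_range] at hy
    obtain ⟨i, hi, rfl⟩ := hy
    have := Nat.find_min hg.exists_zero hi
    omega

lemma f_ofF (g : ℕ → ℕ) (hg : Valid g) : f (ofF g hg) = g := by
  classical
  funext k
  simp only [f, ofF]
  rcases lt_or_ge k (Nat.find hg.exists_zero) with h | h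
  · rw [List.getD_eq_getElem _ _ (by simpa using h)]
    simp
  · rw [List.getD_eq_default _ _ (by simpa using h)]
    exact (hg.zero_mono h (Nat.find_spec hg.exists_zero)).symm

lemma f_inj {μ ν : StrictPartition} (h : f μ = f ν) : μ = ν := by
  have hlen : μ.1.length = ν.1.length := by
    by_contra hne
    rcases Nat.lt_or_ge μ.1.length ν.1.length with hl | hl
    · have h1 : f ν μ.1.length ≠ 0 := by
        have := f_pos_iff (μ := ν) (k := μ.1.length); omega
      have h2 : f μ μ.1.length = 0 := f_eq_zero le_rfl
      rw [h] at h2; exact h1 h2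
    · rcases Nat.eq_or_lt_of_le hl with he | hl
      · omega
      · have h1 : f μ ν.1.length ≠ 0 := by
          have := f_pos_iff (μ := μ) (k := ν.1.length); omega
        have h2 : f ν ν.1.length = 0 := f_eq_zero le_rfl
        rw [← h] at h2; exact h1 h2
  have : μ.1 = ν.1 := by
    apply List.ext_getElem hlen
    intro i h1 h2
    have := congrFun h i
    simp only [f] at this
    rwa [List.getD_eq_getElem _ _ h1, List.getD_eq_getElem _ _ h2] at this
  exact Subtype.ext this

lemma SD_subset_iff {μ ν : StrictPartition} : SD μ ⊆ SD ν ↔ ∀ k, f μ k ≤ f ν k := by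
  constructor
  · intro h k
    by_contra hlt
    push_neg at hlt
    have : (k+1, k+1+ f ν k) ∈ SD μ := mem_SD.2 hlt
    have := h this
    rw [mem_SD] at this
    omega
  · intro h c hc
    obtain ⟨k, t, rfl, ht⟩ := mem_SD_elim hc
    exact mem_SD.2 (lt_of_lt_of_le ht (h k))

lemma SD_inj {μ ν : StrictPartition} (h : SD μ = SD ν) : μ = ν := by
  apply f_inj
  funext k
  have h1 := SD_subset_iff.1 h.le k
  have h2 := SD_subset_iff.1 h.ge k
  omega

lemma sum_eq_sum_f (μ : StrictPartition) :
    μ.1.sum = ∑ k ∈ Finset.range μ.1.length, f μ k := by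
  obtain ⟨l, hl⟩ := μ
  simp only [f]
  clear hl
  induction l with
  | nil => simp
  | cons a l ih =>
    simp only [List.sum_cons, List.length_cons, Finset.sum_range_succ']
    simp only [List.getD_cons_succ, List.getD_cons_zero]
    rw [ih]
    ring

lemma card_SD (μ : StrictPartition) : (SD μ).card = μ.1.sum := by
  have : SD μ = (Finset.range μ.1.length).biUnion
      (fun k => ({k+1} : Finset ℕ) ×ˢ Finset.Ico (k+1) (k+1 + f μ k)) := by
    ext c
    constructor
    · intro hc
      obtain ⟨k, t, rfl, ht⟩ := mem_SD_elim hc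
      simp only [Finset.mem_biUnion, Finset.mem_range, Finset.mem_product,
        Finset.mem_singleton, Finset.mem_Ico]
      exact ⟨k, f_pos_iff.1 (by omega), rfl, by omega, by omega⟩
    · intro hc
      simp only [Finset.mem_biUnion, Finset.mem_range, Finset.mem_product,
        Finset.mem_singleton, Finset.mem_Ico] at hc
      obtain ⟨k, hk, h1, h2, h3⟩ := hc
      have : c = (k+1, k+1+(c.2 - (k+1))) := by
        obtain ⟨a,b⟩ := c; simp at h1 ⊢; omega
      rw [this]
      rw [mem_SD]
      omega
  rw [this, Finset.card_biUnion, sum_eq_sum_f]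
  · apply Finset.sum_congr rfl
    intro k hk
    rw [Finset.card_product, Finset.card_singleton, Nat.card_Ico]
    omega
  · intro i hi j hj hij
    simp only [Finset.disjoint_left]
    intro c hc hc'
    simp only [Finset.mem_product, Finset.mem_singleton] at hc hc'
    omega


-- Part 3
def RemAt (μ : StrictPartition) (k d : ℕ) : Prop := f μ k = d + 1 ∧ (d = 0 ∨ f μ (k+1) < d)
def AddAt (μ : StrictPartition) (k d : ℕ) : Prop := f μ k = d ∧ (k = 0 ∨ d + 2 ≤ f μ (k-1))

lemma cell_inj {k t k' t' : ℕ} :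
    ((k+1 : ℕ), k+1+t) = ((k'+1 : ℕ), k'+1+t') ↔ k = k' ∧ t = t' := by
  constructor
  · intro h; injection h with h1 h2; omega
  · rintro ⟨rfl, rfl⟩; rfl

lemma isRemovable_iff {μ : StrictPartition} {k d : ℕ} :
    IsRemovable μ (k+1, k+1+d) ↔ RemAt μ k d := by
  constructor
  · rintro ⟨hmem, ν, hν⟩
    rw [mem_SD] at hmem
    have char : ∀ k' t, t < f ν k' ↔ (t < f μ k' ∧ ¬(k' = k ∧ t = d)) := by
      intro k' t
      rw [← mem_SD (μ := ν), hν, Finset.mem_erase, mem_SD]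
      simp only [ne_eq, cell_inj]
      tauto
    have hfk : f μ k = d + 1 := by
      have h1 := char k d
      have h2 := char k (f μ k - 1)
      by_contra hne
      have h3 := char k (f ν k - 1)
      omega
    refine ⟨hfk, ?_⟩
    have hνk : f ν k = d := by
      have h1 := char k d
      have h2 := char k (d - 1)
      omega
    have hν1 : f ν (k+1) = f μ (k+1) := by
      have h1 := char (k+1) (f ν (k+1) - 1)
      have h2 := char (k+1) (f μ (k+1) - 1)
      omega
    rcases f_valid ν k with h0 | hlt <;> omega
  · rintro ⟨h1, h2⟩
    refine ⟨mem_SD.2 (by omega), ?_⟩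
    have hval : Valid (Function.update (f μ) k d) := by
      intro j
      rcases eq_or_ne j k with rfl | hjk
      · rcases eq_or_ne (j+1) j with h | h
        · omega
        · simp only [Function.update_self, Function.update_of_ne h]
          rcases f_valid μ j with h0 | hlt <;> omega
      · rcases eq_or_ne (j+1) k with he | hne
        · rw [he, Function.update_self, Function.update_of_ne hjk]
          have := f_valid μ j
          rw [he] at this
          omega
        · simp only [Function.update_of_ne hjk, Function.update_of_ne hne]
          exact f_valid μ j
    refine ⟨ofF _ hval, ?_⟩
    ext c
    constructor
    · intro hc
      obtain ⟨k', t, rfl, ht⟩ := mem_SD_elim hc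
      rw [f_ofF] at ht
      rw [Finset.mem_erase, mem_SD]
      simp only [ne_eq, cell_inj]
      rcases eq_or_ne k' k with rfl | hne
      · rw [Function.update_self] at ht; omega
      · rw [Function.update_of_ne hne] at ht
        exact ⟨by tauto, ht⟩
    · intro hc
      rw [Finset.mem_erase] at hc
      obtain ⟨hne, hc⟩ := hc
      obtain ⟨k', t, rfl, ht⟩ := mem_SD_elim hc
      simp only [ne_eq, cell_inj] at hne
      rw [mem_SD, f_ofF]
      rcases eq_or_ne k' k with rfl | hkk
      · rw [Function.update_self]; omega
      · rw [Function.update_of_ne hkk]; exact ht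

lemma isAddable_iff {μ : StrictPartition} {k d : ℕ} :
    IsAddable μ (k+1, k+1+d) ↔ AddAt μ k d := by
  constructor
  · rintro ⟨hmem, ν, hν⟩
    rw [mem_SD] at hmem
    push_neg at hmem
    have char : ∀ k' t, t < f ν k' ↔ (t < f μ k' ∨ (k' = k ∧ t = d)) := by
      intro k' t
      rw [← mem_SD (μ := ν), hν, Finset.mem_insert, mem_SD, cell_inj]
      tauto
    have hfk : f μ k = d := by
      have h1 := char k d
      have h2 := char k (f μ k)
      omega
    refine ⟨hfk, ?_⟩
    have hνk : f ν k = d + 1 := by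
      have h1 := char k d
      have h2 := char k (f ν k - 1)
      have h3 := char k (d+1)
      omega
    rcases Nat.eq_zero_or_pos k with rfl | hk
    · left; rfl
    · right
      have hν1 : f ν (k-1) = f μ (k-1) := by
        have h1 := char (k-1) (f ν (k-1) - 1)
        have h2 := char (k-1) (f μ (k-1) - 1)
        omega
      have := f_valid ν (k-1)
      rw [Nat.sub_add_cancel hk] at this
      omega
  · rintro ⟨h1, h2⟩
    refine ⟨mem_SD.not.2 (by omega), ?_⟩
    have hval : Valid (Function.update (f μ) k (d+1)) := by
      intro j
      rcases eq_or_ne j k with rfl | hjk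
      · rcases eq_or_ne (j+1) j with h | h
        · omega
        · simp only [Function.update_self, Function.update_of_ne h]
          rcases f_valid μ j with h0 | hlt <;> omega
      · rcases eq_or_ne (j+1) k with he | hne
        · rw [he, Function.update_self, Function.update_of_ne hjk]
          right
          have hj : f μ (k - 1) = f μ j := by rw [show k - 1 = j by omega]
          omega
        · simp only [Function.update_of_ne hjk, Function.update_of_ne hne]
          exact f_valid μ j
    refine ⟨ofF _ hval, ?_⟩
    ext c
    constructor
    · intro hc
      obtain ⟨k', t, rfl, ht⟩ := mem_SD_elim hc
      rw [f_ofF] at ht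
      rw [Finset.mem_insert, mem_SD, cell_inj]
      rcases eq_or_ne k' k with rfl | hne
      · rw [Function.update_self] at ht; omega
      · rw [Function.update_of_ne hne] at ht
        right; exact ht
    · intro hc
      rw [Finset.mem_insert] at hc
      rcases hc with he | hc
      · rw [he, mem_SD, f_ofF, Function.update_self]; omega
      · obtain ⟨k', t, rfl, ht⟩ := mem_SD_elim hc
        rw [mem_SD, f_ofF]
        rcases eq_or_ne k' k with rfl | hkk
        · rw [Function.update_self]; omega
        · rw [Function.update_of_ne hkk]; exact ht

lemma rem_unique {μ : StrictPartition} {k k' d : ℕ} (h : RemAt μ k d) (h' : RemAt μ k' d) :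
    k = k' := by
  obtain ⟨h1, -⟩ := h; obtain ⟨h2, -⟩ := h'
  rcases Nat.lt_trichotomy k k' with hlt | he | hlt
  · have := f_strict (μ := μ) (k := k') (j := k) (by omega) (by omega); omega
  · exact he
  · have := f_strict (μ := μ) (k := k) (j := k') (by omega) (by omega); omega

lemma add_unique {μ : StrictPartition} {k k' d : ℕ} (h : AddAt μ k d) (h' : AddAt μ k' d) :
    k = k' := by
  obtain ⟨h1, h1'⟩ := h; obtain ⟨h2, h2'⟩ := h'
  rcases Nat.eq_zero_or_pos d with rfl | hd
  · rcases Nat.lt_trichotomy k k' with hlt | he | hlt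
    · exfalso
      rcases h2' with rfl | hge
      · omega
      · have := f_anti (μ := μ) (j := k) (k := k'-1) (by omega); omega
    · exact he
    · exfalso
      rcases h1' with rfl | hge
      · omega
      · have := f_anti (μ := μ) (j := k') (k := k-1) (by omega); omega
  · rcases Nat.lt_trichotomy k k' with hlt | he | hlt
    · have := f_strict (μ := μ) (k := k') (j := k) (by omega) (by omega); omega
    · exact he
    · have := f_strict (μ := μ) (k := k) (j := k') (by omega) (by omega); omega

lemma not_rem_add {μ : StrictPartition} {k k' d : ℕ} (h : RemAt μ k d) (h' : AddAt μ k' d) :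
    False := by
  obtain ⟨h1, -⟩ := h; obtain ⟨h2, h2'⟩ := h'
  have hkk : k < k' := by
    by_contra hle
    have := f_anti (μ := μ) (j := k') (k := k) (by omega)
    omega
  rcases h2' with rfl | hge
  · omega
  · have := f_anti (μ := μ) (j := k) (k := k'-1) (by omega)
    omega

lemma isRemovable_elim {μ : StrictPartition} {c : ℕ × ℕ} (h : IsRemovable μ c) :
    ∃ k d, c = (k+1, k+1+d) ∧ RemAt μ k d := by
  obtain ⟨k, t, rfl, ht⟩ := mem_SD_elim h.1
  exact ⟨k, t, rfl, isRemovable_iff.1 h⟩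

/-- the removable cell in a given row is the last cell -/
lemma remAt_last {μ : StrictPartition} {k d : ℕ} (h : RemAt μ k d) : d + 1 = f μ k := h.1.symm


variable {R : Type*} [CommRing R]

/-! ### Part 4: the added partition, and evaluation of `aRaw` -/

lemma add_valid {μ : StrictPartition} {k d : ℕ} (h : AddAt μ k d) :
    Valid (Function.update (f μ) k (d+1)) := by
  obtain ⟨h1, h2⟩ := h
  intro j
  rcases eq_or_ne j k with rfl | hjk
  · rcases eq_or_ne (j+1) j with he | hne
    · omega
    · rw [Function.update_self, Function.update_of_ne hne]
      rcases f_valid μ j with h0 | hlt <;> omega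
  · rcases eq_or_ne (j+1) k with he | hne
    · rw [he, Function.update_self, Function.update_of_ne hjk]
      right
      have hj : f μ (k - 1) = f μ j := by rw [show k - 1 = j by omega]
      omega
    · rw [Function.update_of_ne hjk, Function.update_of_ne hne]
      exact f_valid μ j

def addPart {μ : StrictPartition} {k d : ℕ} (h : AddAt μ k d) : StrictPartition :=
  ofF _ (add_valid h)

lemma f_addPart {μ : StrictPartition} {k d : ℕ} (h : AddAt μ k d) :
    f (addPart h) = Function.update (f μ) k (d+1) := f_ofF _ _

lemma SD_addPart {μ : StrictPartition} {k d : ℕ} (h : AddAt μ k d) :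
    SD (addPart h) = insert (k+1, k+1+d) (SD μ) := by
  ext c
  constructor
  · intro hc
    obtain ⟨k', t, rfl, ht⟩ := mem_SD_elim hc
    rw [f_addPart] at ht
    rw [Finset.mem_insert, mem_SD, cell_inj]
    rcases eq_or_ne k' k with rfl | hne
    · rw [Function.update_self] at ht
      have := h.1
      omega
    · rw [Function.update_of_ne hne] at ht
      right; exact ht
  · intro hc
    rw [Finset.mem_insert] at hc
    rcases hc with he | hc
    · subst he
      rw [mem_SD, f_addPart, Function.update_self]; omega
    · obtain ⟨k', t, rfl, ht⟩ := mem_SD_elim hc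
      rw [mem_SD, f_addPart]
      rcases eq_or_ne k' k with rfl | hkk
      · rw [Function.update_self]
        have := h.1
        omega
      · rw [Function.update_of_ne hkk]; exact ht

lemma sum_addPart {μ : StrictPartition} {k d : ℕ} (h : AddAt μ k d) :
    (addPart h).1.sum = μ.1.sum + 1 := by
  rw [← card_SD, ← card_SD, SD_addPart h, Finset.card_insert_of_notMem]
  rw [mem_SD]
  have := h.1
  omega

lemma notmem_addCell {μ : StrictPartition} {k d : ℕ} (h : AddAt μ k d) :
    (k+1, k+1+d) ∉ SD μ := by
  rw [mem_SD]; have := h.1; omega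

lemma rem_diag_iff {μ : StrictPartition} {d : ℕ} :
    (∃ c : ℕ × ℕ, IsRemovable μ c ∧ c.2 = c.1 + d) ↔ ∃ k, RemAt μ k d := by
  constructor
  · rintro ⟨c, hc, hd⟩
    obtain ⟨k, t, rfl, hr⟩ := isRemovable_elim hc
    simp only at hd
    have : t = d := by omega
    subst this
    exact ⟨k, hr⟩
  · rintro ⟨k, hk⟩
    exact ⟨(k+1, k+1+d), isRemovable_iff.2 hk, rfl⟩

lemma add_diag_iff {μ : StrictPartition} {d : ℕ} :
    (∃ ν : StrictPartition, ∃ c : ℕ × ℕ, c.2 = c.1 + d ∧ c ∉ SD μ ∧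
      SD ν = insert c (SD μ)) ↔ ∃ k, AddAt μ k d := by
  constructor
  · rintro ⟨ν, c, hd, hc, hν⟩
    have hmem : c ∈ SD ν := by rw [hν]; exact Finset.mem_insert_self _ _
    obtain ⟨k, t, rfl, -⟩ := mem_SD_elim hmem
    simp only at hd
    have : t = d := by omega
    subst this
    exact ⟨k, isAddable_iff.1 ⟨hc, ν, hν⟩⟩
  · rintro ⟨k, hk⟩
    exact ⟨addPart hk, (k+1, k+1+d), rfl, notmem_addCell hk, SD_addPart hk⟩

lemma aRaw_rem (β : R) {μ : StrictPartition} {d : ℕ} (h : ∃ k, RemAt μ k d) :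
    aRaw β d μ = Finsupp.single μ β := by
  rw [aRaw, if_pos (rem_diag_iff.2 h)]

lemma aRaw_add (β : R) {μ : StrictPartition} {d k : ℕ} (h0 : ¬ ∃ k, RemAt μ k d)
    (h : AddAt μ k d) : aRaw β d μ = Finsupp.single (addPart h) 1 := by
  rw [aRaw, if_neg (fun hc => h0 (rem_diag_iff.1 hc))]
  have hex : ∃ ν : StrictPartition, ∃ c : ℕ × ℕ, c.2 = c.1 + d ∧ c ∉ SD μ ∧
      SD ν = insert c (SD μ) := add_diag_iff.2 ⟨k, h⟩
  rw [dif_pos hex]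
  congr 1
  obtain ⟨c, hd, hc, hν⟩ := hex.choose_spec
  have hmem : c ∈ SD hex.choose := by rw [hν]; exact Finset.mem_insert_self _ _
  obtain ⟨k', t, rfl, -⟩ := mem_SD_elim hmem
  simp only at hd
  have ht : d = t := by omega
  subst ht
  have hk' : AddAt μ k' d := isAddable_iff.1 ⟨hc, hex.choose, hν⟩
  have : k' = k := add_unique hk' h
  subst this
  exact SD_inj (by rw [hν, SD_addPart h])

lemma aRaw_zero (β : R) {μ : StrictPartition} {d : ℕ} (h0 : ¬ ∃ k, RemAt μ k d)
    (h1 : ¬ ∃ k, AddAt μ k d) : aRaw β d μ = 0 := by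
  rw [aRaw, if_neg (fun hc => h0 (rem_diag_iff.1 hc)),
    dif_neg (fun hc => h1 (add_diag_iff.1 hc))]

lemma aOp_single (β : R) (d : ℕ) (μ : StrictPartition) :
    aOp β d (Finsupp.single μ 1) = aRaw β d μ := by
  rw [aOp]
  simp [Finsupp.lift_apply, Finsupp.sum_single_index]

def AchainAux (β x : R) : ℕ → ((StrictPartition →₀ R) →ₗ[R] (StrictPartition →₀ R))
  | 0 => LinearMap.id
  | m + 1 => (AchainAux β x m).comp (AOp β m x)

lemma Achain_eq_aux (β x : R) (n : ℕ) : Achain β x n = AchainAux β x (n+1) := by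
  induction n with
  | zero =>
    show AOp β 0 x = (AchainAux β x 0).comp (AOp β 0 x)
    rw [AchainAux, LinearMap.id_comp]
  | succ n ih =>
    show (Achain β x n).comp (AOp β (n+1) x) = (AchainAux β x (n+1)).comp (AOp β (n+1) x)
    rw [ih]

lemma achain_step (β x : R) (m : ℕ) (μ : StrictPartition) :
    AchainAux β x (m+1) (Finsupp.single μ 1) =
      AchainAux β x m (Finsupp.single μ 1) + x • AchainAux β x m (aRaw β m μ) := by
  show (AchainAux β x m) (AOp β m x (Finsupp.single μ 1)) = _
  rw [AOp]
  simp only [LinearMap.add_apply, LinearMap.id_apply, LinearMap.smul_apply, map_add, map_smul,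
    aOp_single]

/-! ### Part 5: the vertical strip sets -/

open scoped Classical in
def VStrips (μ κ : StrictPartition) (m : ℕ) : Finset (Finset (ℕ × ℕ)) :=
  (SD κ).powerset.filter (fun V =>
    (∀ c ∈ V, ∀ c' ∈ V, c.1 = c'.1 → c = c') ∧
    V ∪ SD μ = SD κ ∧
    (∀ c ∈ V ∩ SD μ, IsRemovable μ c) ∧
    ∀ c ∈ V, c.2 < c.1 + m)

lemma mem_VStrips {μ κ : StrictPartition} {m : ℕ} {V : Finset (ℕ × ℕ)} :
    V ∈ VStrips μ κ m ↔ V ⊆ SD κ ∧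
      (∀ c ∈ V, ∀ c' ∈ V, c.1 = c'.1 → c = c') ∧
      V ∪ SD μ = SD κ ∧
      (∀ c ∈ V ∩ SD μ, IsRemovable μ c) ∧
      (∀ c ∈ V, c.2 < c.1 + m) := by
  classical
  rw [VStrips, Finset.mem_filter, Finset.mem_powerset]

lemma VStrips_mono {μ κ : StrictPartition} {m : ℕ} {V : Finset (ℕ × ℕ)}
    (h : V ∈ VStrips μ κ m) : V ∈ VStrips μ κ (m+1) := by
  rw [mem_VStrips] at h ⊢
  refine ⟨h.1, h.2.1, h.2.2.1, h.2.2.2.1, fun c hc => ?_⟩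
  have := h.2.2.2.2 c hc
  omega

lemma VStrips_f_le {μ κ : StrictPartition} {m : ℕ} {V : Finset (ℕ × ℕ)}
    (h : V ∈ VStrips μ κ m) (k : ℕ) : f μ k ≤ f κ k := by
  rw [mem_VStrips] at h
  refine SD_subset_iff.1 ?_ k
  rw [← h.2.2.1]
  exact Finset.subset_union_right

lemma rowfill {μ κ : StrictPartition} {m : ℕ} {V : Finset (ℕ × ℕ)}
    (h : V ∈ VStrips μ κ m) {k t : ℕ} (h1 : f μ k ≤ t) (h2 : t < f κ k) :
    (k+1, k+1+t) ∈ V := by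
  rw [mem_VStrips] at h
  have hκ : (k+1, k+1+t) ∈ SD κ := mem_SD.2 h2
  rw [← h.2.2.1, Finset.mem_union] at hκ
  rcases hκ with hV | hμ
  · exact hV
  · rw [mem_SD] at hμ; omega

lemma newcell_diag {μ κ : StrictPartition} {m : ℕ} {V : Finset (ℕ × ℕ)}
    (h : V ∈ VStrips μ κ m) {k t : ℕ} (h1 : f μ k ≤ t) (h2 : t < f κ k) : t < m := by
  have hV := rowfill h h1 h2
  rw [mem_VStrips] at h
  have := h.2.2.2.2 _ hV
  simp only at this
  omega

lemma fk_le {μ κ : StrictPartition} {m : ℕ} {V : Finset (ℕ × ℕ)}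
    (h : V ∈ VStrips μ κ m) (k : ℕ) : f κ k ≤ f μ k + 1 := by
  by_contra hc
  push_neg at hc
  have m1 := rowfill h (k := k) (le_refl (f μ k)) (by omega)
  have m2 := rowfill h (k := k) (t := f μ k + 1) (by omega) (by omega)
  have hstrip := (mem_VStrips.1 h).2.1
  have := hstrip _ m1 _ m2 (by simp)
  rw [cell_inj] at this
  omega

/-- cells of V on the top diagonal `m` (at level `m+1`) are removable or addable cells -/
lemma topdiag {μ κ : StrictPartition} {m : ℕ} {V : Finset (ℕ × ℕ)}
    (hV : V ∈ VStrips μ κ (m+1)) {k : ℕ} (he : (k+1, k+1+m) ∈ V) :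
    RemAt μ k m ∨ AddAt μ k m := by
  have hmem := mem_VStrips.1 hV
  have hκ : (k+1, k+1+m) ∈ SD κ := hmem.1 he
  rw [mem_SD] at hκ
  rcases lt_or_ge m (f μ k) with hin | hout
  · -- cell belongs to SD μ: it is a removable cell
    left
    have := hmem.2.2.2.1 (k+1, k+1+m) (Finset.mem_inter.2 ⟨he, mem_SD.2 hin⟩)
    exact isRemovable_iff.1 this
  · -- new cell
    right
    have hk3 : f κ k ≤ f μ k + 1 := fk_le hV k
    have hfμ : f μ k = m := by omega
    have hfκ : f κ k = m + 1 := by omega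
    refine ⟨hfμ, ?_⟩
    rcases Nat.eq_zero_or_pos k with rfl | hk
    · left; rfl
    · right
      by_contra hlt
      push_neg at hlt
      have hanti : f μ k ≤ f μ (k-1) := f_anti (by omega)
      -- two subcases
      rcases eq_or_ne (f μ (k-1)) (m+1) with he1 | hne1
      · -- row above in μ has length m+1; row above in κ is longer
        have hκv : f κ k < f κ (k-1) := by
          have := f_valid κ (k-1)
          rw [Nat.sub_add_cancel hk] at this
          omega
        have : (m+1 : ℕ) < m + 1 + 1 := by omega
        have hd := newcell_diag hV (k := k-1) (t := m+1) (by omega) (by omega)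
        omega
      · -- f μ (k-1) ≤ m, forces m = 0 and empty row above
        have hμ1 : f μ (k-1) ≤ m := by omega
        have hm0 : f μ (k-1) = f μ k := by omega
        have hmz : f μ k = 0 := by
          have := f_valid μ (k-1)
          rw [Nat.sub_add_cancel hk] at this
          omega
        have hm : m = 0 := by omega
        subst hm
        have hκv : f κ k < f κ (k-1) := by
          have := f_valid κ (k-1)
          rw [Nat.sub_add_cancel hk] at this
          omega
        have hd := newcell_diag hV (k := k-1) (t := 1) (by omega) (by omega)
        omega

lemma VStrips_card_le {μ κ : StrictPartition} {m : ℕ} {V : Finset (ℕ × ℕ)}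
    (h : V ∈ VStrips μ κ m) : κ.1.sum ≤ V.card + μ.1.sum := by
  have hu := (mem_VStrips.1 h).2.2.1
  calc κ.1.sum = (SD κ).card := (card_SD κ).symm
    _ = (V ∪ SD μ).card := by rw [hu]
    _ ≤ V.card + (SD μ).card := Finset.card_union_le _ _
    _ = V.card + μ.1.sum := by rw [card_SD]


/-! ### Part 6: case analysis lemmas -/

lemma VStrips_down {μ κ : StrictPartition} {m : ℕ} {V : Finset (ℕ × ℕ)}
    (hV : V ∈ VStrips μ κ (m+1)) (h : ∀ e ∈ V, e.2 ≠ e.1 + m) : V ∈ VStrips μ κ m := by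
  rw [mem_VStrips] at hV ⊢
  refine ⟨hV.1, hV.2.1, hV.2.2.1, hV.2.2.2.1, fun c hc => ?_⟩
  have h1 := hV.2.2.2.2 c hc
  have h2 := h c hc
  omega

lemma topcell {μ κ : StrictPartition} {m : ℕ} {V : Finset (ℕ × ℕ)}
    (hV : V ∈ VStrips μ κ (m+1)) {e : ℕ × ℕ} (he : e ∈ V) (hd : e.2 = e.1 + m) :
    ∃ k, e = (k+1, k+1+m) ∧ (RemAt μ k m ∨ AddAt μ k m) := by
  have hκ : e ∈ SD κ := (mem_VStrips.1 hV).1 he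
  obtain ⟨k, t, rfl, -⟩ := mem_SD_elim hκ
  simp only at hd
  have ht : t = m := by omega
  subst ht
  exact ⟨k, rfl, topdiag hV he⟩

lemma remAt_to_add {μ : StrictPartition} {ka m : ℕ} (hka : AddAt μ ka m) {k t : ℕ}
    (hk : k ≠ ka) (ht : t < m) (h : RemAt μ k t) : RemAt (addPart hka) k t := by
  have hf := f_addPart hka
  constructor
  · rw [hf, Function.update_of_ne hk]; exact h.1
  · rcases eq_or_ne (k+1) ka with he | hne
    · left
      have h2 := h.2
      have : f μ (k+1) = m := by rw [he]; exact hka.1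
      omega
    · rw [hf, Function.update_of_ne hne]; exact h.2

lemma remAt_from_add {μ : StrictPartition} {ka m : ℕ} (hka : AddAt μ ka m) {k t : ℕ}
    (ht : t < m) (h : RemAt (addPart hka) k t) : RemAt μ k t ∧ k ≠ ka := by
  have hf := f_addPart hka
  have hk : k ≠ ka := by
    intro he
    have h1 := h.1
    rw [hf, he, Function.update_self] at h1
    omega
  refine ⟨⟨?_, ?_⟩, hk⟩
  · have h1 := h.1
    rwa [hf, Function.update_of_ne hk] at h1
  · rcases eq_or_ne (k+1) ka with he | hne
    · left
      have h2 := h.2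
      have : f (addPart hka) (k+1) = m + 1 := by rw [hf, he, Function.update_self]
      omega
    · have h2 := h.2
      rwa [hf, Function.update_of_ne hne] at h2

/-- Case A: erasing the removable top cell -/
lemma A_erase {μ κ : StrictPartition} {m kr : ℕ} (hkr : RemAt μ kr m)
    {V : Finset (ℕ × ℕ)} (hV : V ∈ VStrips μ κ (m+1)) (hc : (kr+1, kr+1+m) ∈ V) :
    V.erase (kr+1, kr+1+m) ∈ VStrips μ κ m := by
  have hcμ : (kr+1, kr+1+m) ∈ SD μ := mem_SD.2 (by have := hkr.1; omega)
  have hmem := mem_VStrips.1 hV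
  rw [mem_VStrips]
  refine ⟨(Finset.erase_subset _ _).trans hmem.1, ?_, ?_, ?_, ?_⟩
  · intro a ha b hb hab
    exact hmem.2.1 a (Finset.mem_of_mem_erase ha) b (Finset.mem_of_mem_erase hb) hab
  · ext e
    simp only [Finset.mem_union, Finset.mem_erase]
    rw [← hmem.2.2.1, Finset.mem_union]
    constructor
    · tauto
    · rintro (heV | heμ)
      · rcases eq_or_ne e (kr+1, kr+1+m) with rfl | hne
        · right; exact hcμ
        · left; exact ⟨hne, heV⟩
      · right; exact heμ
  · intro e heμ
    rw [Finset.mem_inter, Finset.mem_erase] at heμ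
    exact hmem.2.2.2.1 e (Finset.mem_inter.2 ⟨heμ.1.2, heμ.2⟩)
  · intro e he
    rw [Finset.mem_erase] at he
    have h1 := hmem.2.2.2.2 e he.2
    rcases eq_or_ne e.2 (e.1 + m) with hd | hd
    · exfalso
      obtain ⟨k, rfl, hra⟩ := topcell hV he.2 hd
      rcases hra with hr | ha
      · have := rem_unique hr hkr
        subst this
        exact he.1 rfl
      · exact not_rem_add hkr ha
    · omega

/-- Case A: inserting the removable top cell -/
lemma A_insert {μ κ : StrictPartition} {m kr : ℕ} (hkr : RemAt μ kr m)
    {V : Finset (ℕ × ℕ)} (hV : V ∈ VStrips μ κ m) :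
    insert (kr+1, kr+1+m) V ∈ VStrips μ κ (m+1) := by
  have hcμ : (kr+1, kr+1+m) ∈ SD μ := mem_SD.2 (by have := hkr.1; omega)
  have hmem := mem_VStrips.1 hV
  have hsubμκ : SD μ ⊆ SD κ := by
    rw [← hmem.2.2.1]; exact Finset.subset_union_right
  have hrow : ∀ e ∈ V, e.1 ≠ kr + 1 := by
    intro e he hrow
    have hκ : e ∈ SD κ := hmem.1 he
    obtain ⟨k, t, rfl, -⟩ := mem_SD_elim hκ
    simp only at hrow
    have hk : k = kr := by omega
    subst hk
    have hdiag := hmem.2.2.2.2 _ he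
    simp only at hdiag
    have ht : t < m := by omega
    rcases lt_or_ge t (f μ k) with hin | hout
    · have hrem := hmem.2.2.2.1 _ (Finset.mem_inter.2 ⟨he, mem_SD.2 hin⟩)
      have := (isRemovable_iff.1 hrem).1
      have := hkr.1
      omega
    · have := hkr.1
      omega
  rw [mem_VStrips]
  refine ⟨Finset.insert_subset (hsubμκ hcμ) hmem.1, ?_, ?_, ?_, ?_⟩
  · intro a ha b hb hab
    rw [Finset.mem_insert] at ha hb
    rcases ha with rfl | ha <;> rcases hb with rfl | hb
    · rfl
    · exact absurd hab.symm (hrow b hb)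
    · exact absurd hab (hrow a ha)
    · exact hmem.2.1 a ha b hb hab
  · rw [Finset.insert_union, Finset.insert_eq_of_mem (Finset.mem_union_right _ hcμ)]
    exact hmem.2.2.1
  · intro e he
    rw [Finset.mem_inter, Finset.mem_insert] at he
    rcases he.1 with rfl | heV
    · exact isRemovable_iff.2 hkr
    · exact hmem.2.2.2.1 e (Finset.mem_inter.2 ⟨heV, he.2⟩)
  · intro e he
    rw [Finset.mem_insert] at he
    rcases he with rfl | he
    · simp
    · have := hmem.2.2.2.2 e he
      omega

lemma topcell_notmem {μ κ : StrictPartition} {m k : ℕ}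
    {V : Finset (ℕ × ℕ)} (hV : V ∈ VStrips μ κ m) : (k+1, k+1+m) ∉ V := by
  intro hc
  have := (mem_VStrips.1 hV).2.2.2.2 _ hc
  simp at this

/-- Case B: erasing the addable top cell -/
lemma B_erase {μ κ : StrictPartition} {m ka : ℕ} (hnr : ¬ ∃ k, RemAt μ k m)
    (hka : AddAt μ ka m)
    {V : Finset (ℕ × ℕ)} (hV : V ∈ VStrips μ κ (m+1)) (hc : (ka+1, ka+1+m) ∈ V) :
    V.erase (ka+1, ka+1+m) ∈ VStrips (addPart hka) κ m := by
  have hSDν := SD_addPart hka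
  have hmem := mem_VStrips.1 hV
  have hνκ : SD (addPart hka) ⊆ SD κ := by
    rw [hSDν]
    apply Finset.insert_subset (hmem.1 hc)
    rw [← hmem.2.2.1]; exact Finset.subset_union_right
  rw [mem_VStrips]
  refine ⟨(Finset.erase_subset _ _).trans hmem.1, ?_, ?_, ?_, ?_⟩
  · intro a ha b hb hab
    exact hmem.2.1 a (Finset.mem_of_mem_erase ha) b (Finset.mem_of_mem_erase hb) hab
  · ext e
    simp only [Finset.mem_union, Finset.mem_erase, hSDν, Finset.mem_insert]
    rw [← hmem.2.2.1, Finset.mem_union]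
    constructor
    · rintro (⟨-, heV⟩ | rfl | heμ)
      · left; exact heV
      · left; exact hc
      · right; exact heμ
    · rintro (heV | heμ)
      · rcases eq_or_ne e (ka+1, ka+1+m) with rfl | hne
        · right; left; rfl
        · left; exact ⟨hne, heV⟩
      · right; right; exact heμ
  · intro e he
    rw [Finset.mem_inter, Finset.mem_erase] at he
    obtain ⟨⟨hne, heV⟩, heν⟩ := he
    have heμ : e ∈ SD μ := by
      rw [hSDν, Finset.mem_insert] at heν
      tauto
    have hrem := hmem.2.2.2.1 e (Finset.mem_inter.2 ⟨heV, heμ⟩)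
    obtain ⟨k, t, rfl, hr⟩ := isRemovable_elim hrem
    have hdiag := hmem.2.2.2.2 _ heV
    simp only at hdiag
    have htm : t ≠ m := fun h => hnr ⟨k, h ▸ hr⟩
    have ht : t < m := by omega
    have hkka : k ≠ ka := by
      rintro rfl
      exact hne (hmem.2.1 _ heV _ hc rfl)
    exact isRemovable_iff.2 (remAt_to_add hka hkka ht hr)
  · intro e he
    rw [Finset.mem_erase] at he
    have h1 := hmem.2.2.2.2 e he.2
    rcases eq_or_ne e.2 (e.1 + m) with hd | hd
    · exfalso
      obtain ⟨k, rfl, hra⟩ := topcell hV he.2 hd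
      rcases hra with hr | ha
      · exact hnr ⟨k, hr⟩
      · have := add_unique ha hka
        subst this
        exact he.1 rfl
    · omega

/-- Case B: inserting the addable top cell -/
lemma B_insert {μ κ : StrictPartition} {m ka : ℕ} (hnr : ¬ ∃ k, RemAt μ k m)
    (hka : AddAt μ ka m)
    {V : Finset (ℕ × ℕ)} (hV : V ∈ VStrips (addPart hka) κ m) :
    insert (ka+1, ka+1+m) V ∈ VStrips μ κ (m+1) := by
  have hSDν := SD_addPart hka
  have hmem := mem_VStrips.1 hV
  have hνκ : SD (addPart hka) ⊆ SD κ := by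
    rw [← hmem.2.2.1]; exact Finset.subset_union_right
  have hcκ : (ka+1, ka+1+m) ∈ SD κ := hνκ (by rw [hSDν]; exact Finset.mem_insert_self _ _)
  have hfν : f (addPart hka) ka = m + 1 := by rw [f_addPart, Function.update_self]
  have hrow : ∀ e ∈ V, e.1 ≠ ka + 1 := by
    intro e he hrow
    have hκ : e ∈ SD κ := hmem.1 he
    obtain ⟨k, t, rfl, -⟩ := mem_SD_elim hκ
    simp only at hrow
    have hk : k = ka := by omega
    subst hk
    have hdiag := hmem.2.2.2.2 _ he
    simp only at hdiag
    have ht : t < m := by omega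
    rcases lt_or_ge t (f (addPart hka) k) with hin | hout
    · have hrem := hmem.2.2.2.1 _ (Finset.mem_inter.2 ⟨he, mem_SD.2 hin⟩)
      have := (isRemovable_iff.1 hrem).1
      omega
    · omega
  rw [mem_VStrips]
  refine ⟨Finset.insert_subset hcκ hmem.1, ?_, ?_, ?_, ?_⟩
  · intro a ha b hb hab
    rw [Finset.mem_insert] at ha hb
    rcases ha with rfl | ha <;> rcases hb with rfl | hb
    · rfl
    · exact absurd hab.symm (hrow b hb)
    · exact absurd hab (hrow a ha)
    · exact hmem.2.1 a ha b hb hab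
  · have : insert (ka+1, ka+1+m) (V ∪ SD μ) = V ∪ SD (addPart hka) := by
      rw [hSDν]
      ext e
      simp only [Finset.mem_insert, Finset.mem_union]
      tauto
    rw [Finset.insert_union, this, hmem.2.2.1]
  · intro e he
    rw [Finset.mem_inter, Finset.mem_insert] at he
    obtain ⟨he1, he2⟩ := he
    rcases he1 with rfl | heV
    · exact absurd he2 (notmem_addCell hka)
    · have heν : e ∈ SD (addPart hka) := by
        rw [hSDν]; exact Finset.mem_insert_of_mem he2
      have hrem := hmem.2.2.2.1 e (Finset.mem_inter.2 ⟨heV, heν⟩)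
      obtain ⟨k, t, rfl, hr⟩ := isRemovable_elim hrem
      have hdiag := hmem.2.2.2.2 _ heV
      simp only at hdiag
      have ht : t < m := by omega
      exact isRemovable_iff.2 (remAt_from_add hka ht hr).1
  · intro e he
    rw [Finset.mem_insert] at he
    rcases he with rfl | he
    · simp
    · have := hmem.2.2.2.2 e he
      omega


/-! ### Part 7: the main induction -/

theorem key (β x : R) (m : ℕ) (κ : StrictPartition) (μ : StrictPartition) :
    (AchainAux β x m (Finsupp.single μ 1)) κ =
      ∑ V ∈ VStrips μ κ m, β ^ (V.card + μ.1.sum - κ.1.sum) * x ^ V.card := by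
  induction m generalizing μ with
  | zero =>
    classical
    show (Finsupp.single μ (1:R)) κ = _
    rw [Finsupp.single_apply]
    have hVS : VStrips μ κ 0 = if μ = κ then {(∅ : Finset (ℕ × ℕ))} else ∅ := by
      ext V
      have hempty : V ∈ VStrips μ κ 0 → V = ∅ := by
        intro hV
        rw [Finset.eq_empty_iff_forall_notMem]
        intro e he
        have h1 := (mem_VStrips.1 hV).2.2.2.2 e he
        have h2 := (mem_VStrips.1 hV).1 he
        obtain ⟨k, t, rfl, -⟩ := mem_SD_elim h2
        simp only at h1
        omega
      split_ifs with hμκ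
      · subst hμκ
        simp only [Finset.mem_singleton]
        constructor
        · exact hempty
        · rintro rfl
          rw [mem_VStrips]
          exact ⟨Finset.empty_subset _, by simp, by rw [Finset.empty_union], by simp, by simp⟩
      · simp only [Finset.notMem_empty, iff_false]
        intro hV
        have hE := hempty hV
        subst hE
        have := (mem_VStrips.1 hV).2.2.1
        rw [Finset.empty_union] at this
        exact hμκ (SD_inj this)
    rw [hVS]
    split_ifs with hμκ
    · subst hμκ
      simp
    · simp
  | succ m IH =>
    rw [achain_step]
    rw [Finsupp.add_apply, Finsupp.smul_apply, smul_eq_mul, IH μ]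
    by_cases hrem : ∃ k, RemAt μ k m
    · -- Case A
      obtain ⟨kr, hkr⟩ := hrem
      rw [aRaw_rem β ⟨kr, hkr⟩]
      have hsβ : Finsupp.single μ β = β • Finsupp.single μ (1:R) := by
        rw [Finsupp.smul_single, smul_eq_mul, mul_one]
      rw [hsβ, map_smul, Finsupp.smul_apply, smul_eq_mul, IH μ]
      rw [← Finset.sum_filter_add_sum_filter_not (VStrips μ κ (m+1))
        (fun V => (kr+1, kr+1+m) ∈ V)]
      have h2 : (VStrips μ κ (m+1)).filter (fun V => ¬ (kr+1, kr+1+m) ∈ V)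
          = VStrips μ κ m := by
        ext V
        rw [Finset.mem_filter]
        constructor
        · rintro ⟨hV, hcV⟩
          apply VStrips_down hV
          intro e he hd
          obtain ⟨k, rfl, hra⟩ := topcell hV he hd
          rcases hra with hr | ha
          · have hk : k = kr := rem_unique hr hkr
            subst hk
            exact hcV he
          · exact not_rem_add hkr ha
        · intro hV
          exact ⟨VStrips_mono hV, topcell_notmem hV⟩
      have h1 : ∑ V ∈ (VStrips μ κ (m+1)).filter (fun V => (kr+1, kr+1+m) ∈ V),
            β ^ (V.card + μ.1.sum - κ.1.sum) * x ^ V.card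
          = ∑ V ∈ VStrips μ κ m, (β * x) * (β ^ (V.card + μ.1.sum - κ.1.sum) * x ^ V.card) := by
        apply Finset.sum_nbij' (i := fun V => V.erase (kr+1, kr+1+m))
          (j := fun V => insert (kr+1, kr+1+m) V)
        · intro V hV
          rw [Finset.mem_filter] at hV
          exact A_erase hkr hV.1 hV.2
        · intro V hV
          rw [Finset.mem_filter]
          exact ⟨A_insert hkr hV, Finset.mem_insert_self _ _⟩
        · intro V hV
          rw [Finset.mem_filter] at hV
          exact Finset.insert_erase hV.2
        · intro V hV
          exact Finset.erase_insert (topcell_notmem hV)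
        · intro V hV
          rw [Finset.mem_filter] at hV
          have hcard : (V.erase (kr+1, kr+1+m)).card = V.card - 1 :=
            Finset.card_erase_of_mem hV.2
          have hpos : 1 ≤ V.card := Finset.card_pos.2 ⟨_, hV.2⟩
          have hle : κ.1.sum ≤ (V.erase (kr+1, kr+1+m)).card + μ.1.sum :=
            VStrips_card_le (A_erase hkr hV.1 hV.2)
          rw [hcard] at hle ⊢
          obtain ⟨a, ha⟩ : ∃ a, V.card = a + 1 := ⟨V.card - 1, by omega⟩
          rw [ha] at hle ⊢
          simp only [Nat.add_sub_cancel] at hle ⊢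
          rw [show a + 1 + μ.1.sum - κ.1.sum = (a + μ.1.sum - κ.1.sum) + 1 from by omega,
            pow_succ, pow_succ]
          ring
      rw [h1, h2, ← Finset.mul_sum]
      ring
    · by_cases hadd : ∃ k, AddAt μ k m
      · -- Case B
        obtain ⟨ka, hka⟩ := hadd
        rw [aRaw_add β hrem hka, IH (addPart hka)]
        rw [← Finset.sum_filter_add_sum_filter_not (VStrips μ κ (m+1))
          (fun V => (ka+1, ka+1+m) ∈ V)]
        have h2 : (VStrips μ κ (m+1)).filter (fun V => ¬ (ka+1, ka+1+m) ∈ V)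
            = VStrips μ κ m := by
          ext V
          rw [Finset.mem_filter]
          constructor
          · rintro ⟨hV, hcV⟩
            apply VStrips_down hV
            intro e he hd
            obtain ⟨k, rfl, hra⟩ := topcell hV he hd
            rcases hra with hr | ha
            · exact hrem ⟨k, hr⟩
            · have hk : k = ka := add_unique ha hka
              subst hk
              exact hcV he
          · intro hV
            exact ⟨VStrips_mono hV, topcell_notmem hV⟩
        have h1 : ∑ V ∈ (VStrips μ κ (m+1)).filter (fun V => (ka+1, ka+1+m) ∈ V),
              β ^ (V.card + μ.1.sum - κ.1.sum) * x ^ V.card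
            = ∑ V ∈ VStrips (addPart hka) κ m,
                x * (β ^ (V.card + (addPart hka).1.sum - κ.1.sum) * x ^ V.card) := by
          apply Finset.sum_nbij' (i := fun V => V.erase (ka+1, ka+1+m))
            (j := fun V => insert (ka+1, ka+1+m) V)
          · intro V hV
            rw [Finset.mem_filter] at hV
            exact B_erase hrem hka hV.1 hV.2
          · intro V hV
            rw [Finset.mem_filter]
            exact ⟨B_insert hrem hka hV, Finset.mem_insert_self _ _⟩
          · intro V hV
            rw [Finset.mem_filter] at hV
            exact Finset.insert_erase hV.2
          · intro V hV
            exact Finset.erase_insert (topcell_notmem hV)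
          · intro V hV
            rw [Finset.mem_filter] at hV
            have hcard : (V.erase (ka+1, ka+1+m)).card = V.card - 1 :=
              Finset.card_erase_of_mem hV.2
            have hpos : 1 ≤ V.card := Finset.card_pos.2 ⟨_, hV.2⟩
            have hsum : (addPart hka).1.sum = μ.1.sum + 1 := sum_addPart hka
            rw [hcard, hsum]
            obtain ⟨a, ha⟩ : ∃ a, V.card = a + 1 := ⟨V.card - 1, by omega⟩
            rw [ha]
            simp only [Nat.add_sub_cancel]
            rw [show a + 1 + μ.1.sum - κ.1.sum = a + (μ.1.sum + 1) - κ.1.sum from by omega,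
              pow_succ]
            ring
        rw [h1, h2]
        rw [← Finset.mul_sum]
        ring
      · -- Case C
        rw [aRaw_zero β hrem hadd, map_zero, Finsupp.coe_zero, Pi.zero_apply, mul_zero, add_zero]
        have h2 : VStrips μ κ (m+1) = VStrips μ κ m := by
          ext V
          constructor
          · intro hV
            apply VStrips_down hV
            intro e he hd
            obtain ⟨k, rfl, hra⟩ := topcell hV he hd
            rcases hra with hr | ha
            · exact hrem ⟨k, hr⟩
            · exact hadd ⟨k, ha⟩
          · exact VStrips_mono
        rw [h2]


end SP

open scoped Classical in
/-- For strict partitions `μ ⊆ λ` and `n ≥ λ₁`, the coefficient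
`⟨λ, A₀(x)A₁(x)⋯A_n(x)·μ⟩` equals `Σ_V β^{-|λ/μ|}·(βx)^{|V|}
 = Σ_V β^{|V|-(|λ|-|μ|)}·x^{|V|}`,
summed over the vertical strips `V` (sets of cells with at most one cell per row) with
`V ∪ SD_μ = SD_λ` and `V ∩ SD_μ ⊆ Rem(μ)` (the removable boxes of `μ`). -/
theorem coeff_Achain_eq_sum_vertical_strips {R : Type*} [CommRing R] (β x : R)
    (n : ℕ) (μ lam : StrictPartition) (hsub : SD μ ⊆ SD lam)
    (hn : lam.1.headD 0 ≤ n) :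
    (Achain β x n (Finsupp.single μ 1)) lam =
      ∑ V ∈ (SD lam).powerset.filter (fun V =>
          (∀ c ∈ V, ∀ c' ∈ V, c.1 = c'.1 → c = c') ∧
          V ∪ SD μ = SD lam ∧
          ∀ c ∈ V ∩ SD μ, IsRemovable μ c),
        β ^ (V.card + μ.1.sum - lam.1.sum) * x ^ V.card := by
  rw [SP.Achain_eq_aux, SP.key β x (n+1) lam μ]
  congr 1
  ext V
  rw [SP.mem_VStrips, Finset.mem_filter, Finset.mem_powerset]
  constructor
  · rintro ⟨h1, h2, h3, h4, h5⟩
    exact ⟨h1, h2, h3, h4⟩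
  · rintro ⟨h1, h2, h3, h4⟩
    refine ⟨h1, h2, h3, h4, ?_⟩
    intro c hc
    obtain ⟨k, t, rfl, ht⟩ := SP.mem_SD_elim (h1 hc)
    have hanti : SP.f lam k ≤ SP.f lam 0 := SP.f_anti (Nat.zero_le k)
    have h0 : SP.f lam 0 = lam.1.headD 0 := SP.f_zero lam
    simp only
    omega

end
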